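/- Let x* ∈ ℝⁿ with ‖x*‖₀ ≤ s (s < n), and suppose the vectors {∇gᵢ(x*)}_{i ∈ 𝓘_g(x*)} ∪ {∇hᵢ(x*)}_{i=1}^p ∪ {eᵢ}_{i ∈ supp(x*)ᶜ} are linearly independent (CCOP-LICQ). Then CCOP-NNAMCQ holds at x*: there is no nonzero (λᵍ, λʰ, η) with λᵍᵢ ≥ 0 for i ∈ 𝓘_g(x*), ηᵢ = 0 for all i ∈ supp(x*), ‖η‖₀ ≤ n − s, satisfying Σ_{i ∈ 𝓘_g(x*)} λᵍᵢ ∇gᵢ(x*) + Σᵢ λʰᵢ ∇hᵢ(x*) + η = 0. -/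

import Mathlib

open Filter Topology Metric Set
open scoped Classical

noncomputable section

abbrev E (n : ℕ) := EuclideanSpace ℝ (Fin n)

/-- Bouligand tangent cone. -/
def bouligand {n : ℕ} (S : Set (E n)) (x : E n) : Set (E n) :=
  {d | ∃ t : ℕ → ℝ, ∃ dk : ℕ → E n,
    (∀ k, 0 < t k) ∧ Tendsto t atTop (𝓝 0) ∧ Tendsto dk atTop (𝓝 d) ∧
    ∀ k, x + t k • dk k ∈ S}

/-- Fréchet (regular) normal cone. -/
def frechetNormal {n : ℕ} (S : Set (E n)) (x : E n) : Set (E n) :=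
  {v | ∀ ε > (0 : ℝ), ∃ δ > (0 : ℝ), ∀ y ∈ S, ‖y - x‖ < δ →
    (inner ℝ v (y - x) : ℝ) ≤ ε * ‖y - x‖}

/-- Mordukhovich (limiting) normal cone. -/
def limitingNormal {n : ℕ} (S : Set (E n)) (x : E n) : Set (E n) :=
  {v | ∃ xk : ℕ → E n, ∃ vk : ℕ → E n,
    (∀ k, xk k ∈ S) ∧ Tendsto xk atTop (𝓝 x) ∧
    (∀ k, vk k ∈ frechetNormal S (xk k)) ∧ Tendsto vk atTop (𝓝 v)}

/-- Directional limiting normal cone. -/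
def dirLimitingNormal {n : ℕ} (S : Set (E n)) (x d : E n) : Set (E n) :=
  {v | ∃ t : ℕ → ℝ, ∃ dk : ℕ → E n, ∃ vk : ℕ → E n,
    (∀ k, 0 < t k) ∧ Tendsto t atTop (𝓝 0) ∧ Tendsto dk atTop (𝓝 d) ∧
    Tendsto vk atTop (𝓝 v) ∧ ∀ k, vk k ∈ frechetNormal S (x + t k • dk k)}

/-- Support of a vector. -/
def supp {n : ℕ} (x : E n) : Finset (Fin n) := Finset.univ.filter (fun i => x i ≠ 0)

/-- The ℓ₀ "norm": number of nonzero components. -/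
def l0 {n : ℕ} (x : E n) : ℕ := (supp x).card

/-- The sparsity set {x : ‖x‖₀ ≤ s}. -/
def sparseSet (n s : ℕ) : Set (E n) := {x | l0 x ≤ s}

/-- Coordinate subspace ℝ_I of vectors supported on I. -/
def coordSub {n : ℕ} (I : Finset (Fin n)) : Set (E n) := {x | ∀ i ∉ I, x i = 0}

theorem stmt16 {n s m p : ℕ} (hs : s < n)
    (g : Fin m → E n → ℝ) (h : Fin p → E n → ℝ)
    (x : E n) (hx : l0 x ≤ s)
    (licq : LinearIndependent ℝ
      (fun i : ({i : Fin m // g i x = 0} ⊕ Fin p ⊕ {i : Fin n // x i = 0}) =>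
        match i with
        | Sum.inl i => gradient (g i.1) x
        | Sum.inr (Sum.inl i) => gradient (h i) x
        | Sum.inr (Sum.inr i) => (EuclideanSpace.single i.1 (1 : ℝ) : E n))) :
    ¬ ∃ (lg : {i : Fin m // g i x = 0} → ℝ) (lh : Fin p → ℝ) (η : E n),
      (∀ i, 0 ≤ lg i) ∧
      (∀ i ∈ supp x, η i = 0) ∧ l0 η ≤ n - s ∧
      (∑ i, lg i • gradient (g i.1) x) + (∑ i, lh i • gradient (h i) x) + η = 0 ∧
      ¬ (lg = 0 ∧ lh = 0 ∧ η = 0) := by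
  rintro ⟨lg, lh, η, _, hsupp, _, hsum, hne⟩
  -- express η as a combination of basis vectors on the zero set of x
  have hη : η = ∑ i : {i : Fin n // x i = 0}, η i.1 • (EuclideanSpace.single i.1 (1:ℝ) : E n) := by
    ext j
    rw [WithLp.ofLp_sum, Finset.sum_apply]
    simp only [PiLp.smul_apply, EuclideanSpace.single_apply, smul_eq_mul]
    by_cases hj : x j = 0
    · rw [Finset.sum_eq_single (⟨j, hj⟩ : {i : Fin n // x i = 0})]
      · simp
      · rintro ⟨b, hb⟩ - hbj
        simp only [mul_ite, mul_one, mul_zero, ite_eq_right_iff]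
        intro hbj'
        exact (hbj (Subtype.ext hbj'.symm)).elim
      · simp
    · have : η j = 0 := hsupp j (by simp [supp, hj])
      rw [this]
      symm
      apply Finset.sum_eq_zero
      rintro ⟨b, hb⟩ -
      simp only [mul_ite, mul_one, mul_zero, ite_eq_right_iff]
      intro hbj
      exact (hj (hbj ▸ hb)).elim
  set c : ({i : Fin m // g i x = 0} ⊕ Fin p ⊕ {i : Fin n // x i = 0}) → ℝ :=
    fun i => match i with
      | Sum.inl i => lg i
      | Sum.inr (Sum.inl i) => lh i
      | Sum.inr (Sum.inr i) => η i.1 with hc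
  have hzero : ∑ i, c i • (match i with
        | Sum.inl i => gradient (g i.1) x
        | Sum.inr (Sum.inl i) => gradient (h i) x
        | Sum.inr (Sum.inr i) => (EuclideanSpace.single i.1 (1 : ℝ) : E n)) = 0 := by
    rw [Fintype.sum_sum_type, Fintype.sum_sum_type]
    rw [hη] at hsum
    simpa [hc, add_assoc] using hsum
  have hcall := (Fintype.linearIndependent_iff.mp licq) c hzero
  refine hne ⟨?_, ?_, ?_⟩
  · funext i; exact hcall (Sum.inl i)
  · funext i; exact hcall (Sum.inr (Sum.inl i))
  · rw [hη]
    apply Finset.sum_eq_zero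
    intro i _
    exact smul_eq_zero_of_left (hcall (Sum.inr (Sum.inr i))) _
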